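/- arXiv:2208.07458 — 6 statements merged into one kernel-verified Lean document; each statement's English description precedes it below -/
import Mathlib

section
/- Let Λ be an n×n real diagonal matrix with diagonal entries λ_i ∈ [0,1], and let 0 = t₀ < t₁ < ⋯ < t_J be natural numbers. Then for every vector y ∈ ℝⁿ, ‖Λ^(t_J) y‖² + Σ_{j=0}^{J-1} ‖(Λ^(t_j) − Λ^(t_{j+1})) y‖² ≤ ‖y‖², where ‖·‖ is the Euclidean norm. -/
lemma scalar_key (lam : ℝ) (h0 : 0 ≤ lam) (h1 : lam ≤ 1) (t : ℕ → ℕ) :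
    ∀ J, (∀ j < J, t j < t (j + 1)) →
    (lam ^ t J) ^ 2 + ∑ j ∈ Finset.range J, (lam ^ t j - lam ^ t (j + 1)) ^ 2
      ≤ (lam ^ t 0) ^ 2 := by
  intro J
  induction J with
  | zero => simp
  | succ J ih =>
    intro hm
    rw [Finset.sum_range_succ]
    have ihJ := ih (fun j hj => hm j (Nat.lt_succ_of_lt hj))
    have hab : lam ^ t (J + 1) ≤ lam ^ t J :=
      pow_le_pow_of_le_one h0 h1 (le_of_lt (hm J (Nat.lt_succ_self J)))
    have ha : 0 ≤ lam ^ t (J + 1) := pow_nonneg h0 _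
    nlinarith [sq_nonneg (lam ^ t J - lam ^ t (J + 1))]

open Matrix in
theorem stmt3 (n : ℕ) (d : Fin n → ℝ) (hd : ∀ i, d i ∈ Set.Icc (0 : ℝ) 1)
    (J : ℕ) (t : ℕ → ℕ) (ht0 : t 0 = 0) (hmono : ∀ j < J, t j < t (j + 1))
    (y : Fin n → ℝ) :
    (∑ i, (((Matrix.diagonal d ^ t J).mulVec y) i) ^ 2) +
      ∑ j ∈ Finset.range J,
        ∑ i, (((Matrix.diagonal d ^ t j - Matrix.diagonal d ^ t (j + 1)).mulVec y) i) ^ 2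
      ≤ ∑ i, (y i) ^ 2 := by
  have hpow : ∀ (k : ℕ) (i : Fin n), ((Matrix.diagonal d ^ k).mulVec y) i = d i ^ k * y i := by
    intro k i
    rw [Matrix.diagonal_pow, Matrix.mulVec_diagonal]
    rfl
  have hsub : ∀ (k l : ℕ) (i : Fin n),
      ((Matrix.diagonal d ^ k - Matrix.diagonal d ^ l).mulVec y) i
        = (d i ^ k - d i ^ l) * y i := by
    intro k l i
    rw [Matrix.sub_mulVec]
    simp [hpow, sub_mul]
  simp only [hpow, hsub]
  rw [Finset.sum_comm, ← Finset.sum_add_distrib]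
  apply Finset.sum_le_sum
  intro i _
  have key := scalar_key (d i) (hd i).1 (hd i).2 t J hmono
  rw [ht0] at key
  simp only [pow_zero, one_pow] at key
  have hy : 0 ≤ (y i) ^ 2 := sq_nonneg _
  calc (d i ^ t J * y i) ^ 2 + ∑ j ∈ Finset.range J, ((d i ^ t j - d i ^ t (j + 1)) * y i) ^ 2
      = ((d i ^ t J) ^ 2 + ∑ j ∈ Finset.range J, (d i ^ t j - d i ^ t (j + 1)) ^ 2) * (y i) ^ 2 := by
        rw [add_mul, Finset.sum_mul, mul_pow]
        congr 1
        exact Finset.sum_congr rfl fun j _ => mul_pow _ _ _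
    _ ≤ 1 * (y i) ^ 2 := by apply mul_le_mul_of_nonneg_right key hy
    _ = (y i) ^ 2 := one_mul _
end

section
/- Let Λ be an n×n real diagonal matrix with diagonal entries λ_i ∈ [0,1], let 0 = t₀ < t₁ < ⋯ < t_J be natural numbers, and let C := min over ξ ∈ [0,1] of (ξ^(2t_J) + (1 − ξ^(t₁))²). Then for every vector y ∈ ℝⁿ, ‖Λ^(t_J) y‖² + Σ_{j=0}^{J-1} ‖(Λ^(t_j) − Λ^(t_{j+1})) y‖² ≥ C ‖y‖². -/
open Matrix in
theorem stmt4 (n : ℕ) (d : Fin n → ℝ) (hd : ∀ i, d i ∈ Set.Icc (0 : ℝ) 1)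
    (J : ℕ) (t : ℕ → ℕ) (ht0 : t 0 = 0) (hmono : ∀ j < J, t j < t (j + 1))
    (C : ℝ)
    (hC : C = sInf ((fun ξ : ℝ => ξ ^ (2 * t J) + (1 - ξ ^ t 1) ^ 2) '' Set.Icc (0 : ℝ) 1))
    (y : Fin n → ℝ) :
    C * ∑ i, (y i) ^ 2 ≤
      (∑ i, (((Matrix.diagonal d ^ t J).mulVec y) i) ^ 2) +
      ∑ j ∈ Finset.range J,
        ∑ i, (((Matrix.diagonal d ^ t j - Matrix.diagonal d ^ t (j + 1)).mulVec y) i) ^ 2 := by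
  have hbdd : BddBelow ((fun ξ : ℝ => ξ ^ (2 * t J) + (1 - ξ ^ t 1) ^ 2) '' Set.Icc (0 : ℝ) 1) := by
    refine ⟨0, ?_⟩
    rintro z ⟨ξ, hξ, rfl⟩
    have h1 : (0:ℝ) ≤ ξ ^ (2 * t J) := pow_nonneg hξ.1 _
    simp only []
    nlinarith [sq_nonneg (1 - ξ ^ t 1)]
  have hle : ∀ ξ ∈ Set.Icc (0:ℝ) 1, C ≤ ξ ^ (2 * t J) + (1 - ξ ^ t 1) ^ 2 := by
    intro ξ hξ
    rw [hC]
    exact csInf_le hbdd ⟨ξ, hξ, rfl⟩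
  -- key pointwise bound
  have key : ∀ i, C * (y i) ^ 2 ≤
      ((d i ^ t J) * y i) ^ 2 +
      ∑ j ∈ Finset.range J, ((d i ^ t j - d i ^ t (j + 1)) * y i) ^ 2 := by
    intro i
    have hx := hd i
    have hfac : C ≤ (d i) ^ (2 * t J) + ∑ j ∈ Finset.range J, (d i ^ t j - d i ^ t (j + 1)) ^ 2 := by
      rcases Nat.eq_zero_or_pos J with hJ | hJ
      · subst hJ
        have h1 : C ≤ (1:ℝ) ^ (2 * t 0) + (1 - (1:ℝ) ^ t 1) ^ 2 :=
          hle 1 ⟨zero_le_one, le_refl 1⟩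
        simpa [ht0] using h1
      · have h1 : C ≤ (d i) ^ (2 * t J) + (1 - (d i) ^ t 1) ^ 2 := hle _ hx
        have h2 : (1 - (d i) ^ t 1) ^ 2 = (d i ^ t 0 - d i ^ t 1) ^ 2 := by
          rw [ht0, pow_zero]
        have h3 : (d i ^ t 0 - d i ^ t 1) ^ 2 ≤
            ∑ j ∈ Finset.range J, (d i ^ t j - d i ^ t (j + 1)) ^ 2 := by
          refine Finset.single_le_sum (f := fun j => (d i ^ t j - d i ^ t (j+1)) ^ 2)
            (fun j _ => sq_nonneg _) (Finset.mem_range.mpr hJ)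
        linarith
    have hy : (0:ℝ) ≤ (y i) ^ 2 := sq_nonneg _
    calc C * (y i) ^ 2
        ≤ ((d i) ^ (2 * t J) + ∑ j ∈ Finset.range J, (d i ^ t j - d i ^ t (j + 1)) ^ 2) * (y i) ^ 2 :=
          mul_le_mul_of_nonneg_right hfac hy
      _ = ((d i ^ t J) * y i) ^ 2 +
          ∑ j ∈ Finset.range J, ((d i ^ t j - d i ^ t (j + 1)) * y i) ^ 2 := by
          rw [add_mul, Finset.sum_mul]
          congr 1
          · rw [mul_pow, two_mul, pow_add]; ring
          · exact Finset.sum_congr rfl fun j _ => (mul_pow _ _ _).symm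
  have hsimp : ∀ (k : ℕ) (i : Fin n), ((Matrix.diagonal d ^ k).mulVec y) i = d i ^ k * y i := by
    intro k i
    rw [Matrix.diagonal_pow, Matrix.mulVec_diagonal, Pi.pow_apply]
  calc C * ∑ i, (y i) ^ 2 = ∑ i, C * (y i) ^ 2 := Finset.mul_sum _ _ _
    _ ≤ ∑ i, (((d i ^ t J) * y i) ^ 2 +
          ∑ j ∈ Finset.range J, ((d i ^ t j - d i ^ t (j + 1)) * y i) ^ 2) :=
        Finset.sum_le_sum fun i _ => key i
    _ = (∑ i, ((d i ^ t J) * y i) ^ 2) +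
          ∑ i, ∑ j ∈ Finset.range J, ((d i ^ t j - d i ^ t (j + 1)) * y i) ^ 2 :=
        Finset.sum_add_distrib
    _ = _ := by
        rw [Finset.sum_comm]
        congr 1
        · exact Finset.sum_congr rfl fun i _ => by rw [hsimp]
        · refine Finset.sum_congr rfl fun j _ => Finset.sum_congr rfl fun i _ => ?_
          rw [Matrix.sub_mulVec, Pi.sub_apply, hsimp, hsimp, sub_mul]
end

section
/- Let M be a real symmetric n×n matrix whose eigenvalues all lie in [0,1], and let 0 = t₀ < t₁ < ⋯ < t_J be natural numbers. Define Φ := M^(t_J) and Ψ_j := M^(t_j) − M^(t_{j+1}) for 0 ≤ j ≤ J−1. Then there is a constant C > 0, depending only on t₁ and t_J, such that for every x ∈ ℝⁿ, C‖x‖² ≤ ‖Φx‖² + Σ_{j=0}^{J-1} ‖Ψ_j x‖² ≤ ‖x‖². -/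
open Matrix Finset

-- conjugation power lemma
lemma conj_pow' {n : ℕ} (U D V : Matrix (Fin n) (Fin n) ℝ) (hVU : V * U = 1)
    (hUV : U * V = 1) (k : ℕ) : (U * D * V) ^ k = U * D ^ k * V := by
  induction k with
  | zero => simpa using hUV.symm
  | succ k ih =>
    rw [pow_succ, ih, pow_succ]
    calc U * D ^ k * V * (U * D * V) = U * D ^ k * (V * U) * (D * V) := by
          simp only [Matrix.mul_assoc]
      _ = U * (D ^ k * D) * V := by rw [hVU]; simp only [Matrix.mul_assoc, Matrix.one_mul]

-- norm preservation under orthogonal matrix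
lemma orth_norm {n : ℕ} (U : Matrix (Fin n) (Fin n) ℝ) (hU : Uᵀ * U = 1)
    (z : Fin n → ℝ) : ∑ i, ((U *ᵥ z) i) ^ 2 = ∑ i, (z i) ^ 2 := by
  have h1 : ∀ w : Fin n → ℝ, ∑ i, (w i) ^ 2 = w ⬝ᵥ w := by
    intro w; simp [dotProduct, sq]
  rw [h1, h1, dotProduct_mulVec, ← Matrix.mulVec_transpose, Matrix.mulVec_mulVec, hU,
    Matrix.one_mulVec]

-- scalar upper bound
lemma scalar_upper (J : ℕ) (t : ℕ → ℕ) (ht0 : t 0 = 0) (hmono : ∀ j < J, t j < t (j + 1))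
    (ξ : ℝ) (h0 : 0 ≤ ξ) (h1 : ξ ≤ 1) :
    (ξ ^ t J) ^ 2 + ∑ j ∈ Finset.range J, (ξ ^ t j - ξ ^ t (j + 1)) ^ 2 ≤ 1 := by
  set d : ℕ → ℝ := fun j => ξ ^ t j - ξ ^ t (j + 1) with hd
  have hdnn : ∀ j ∈ Finset.range J, 0 ≤ d j := by
    intro j hj
    have := pow_le_pow_of_le_one h0 h1 (le_of_lt (hmono j (Finset.mem_range.mp hj)))
    simpa [hd] using this
  have hsum : ∑ j ∈ Finset.range J, d j = 1 - ξ ^ t J := by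
    rw [Finset.sum_range_sub' (fun j => ξ ^ t j) J, ht0, pow_zero]
  have hsq : ∑ j ∈ Finset.range J, d j ^ 2 ≤ (∑ j ∈ Finset.range J, d j) ^ 2 :=
    Finset.sum_sq_le_sq_sum_of_nonneg hdnn
  have ha0 : 0 ≤ ξ ^ t J := pow_nonneg h0 _
  have ha1 : ξ ^ t J ≤ 1 := pow_le_one₀ h0 h1
  nlinarith [hsq, hsum]

open Matrix in
theorem stmt5 (n : ℕ) (M : Matrix (Fin n) (Fin n) ℝ) (hsym : M.IsSymm)
    (hspec : spectrum ℝ M ⊆ Set.Icc (0 : ℝ) 1)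
    (J : ℕ) (t : ℕ → ℕ) (ht0 : t 0 = 0) (hmono : ∀ j < J, t j < t (j + 1)) :
    ∃ C > 0, ∀ x : Fin n → ℝ,
      C * ∑ i, (x i) ^ 2 ≤
        (∑ i, (((M ^ t J).mulVec x) i) ^ 2) +
          ∑ j ∈ Finset.range J, ∑ i, (((M ^ t j - M ^ t (j + 1)).mulVec x) i) ^ 2 ∧
      (∑ i, (((M ^ t J).mulVec x) i) ^ 2) +
          ∑ j ∈ Finset.range J, ∑ i, (((M ^ t j - M ^ t (j + 1)).mulVec x) i) ^ 2
        ≤ ∑ i, (x i) ^ 2 := by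
  rcases Nat.eq_zero_or_pos J with hJ | hJpos
  · subst hJ
    refine ⟨1, one_pos, fun x => ?_⟩
    simp [ht0]
  -- J ≥ 1
  have hM : M.IsHermitian := by
    rw [Matrix.IsHermitian, Matrix.conjTranspose_eq_transpose_of_trivial]; exact hsym
  set U : Matrix (Fin n) (Fin n) ℝ := (Matrix.IsHermitian.eigenvectorUnitary hM : Matrix (Fin n) (Fin n) ℝ) with hUdef
  set ev : Fin n → ℝ := hM.eigenvalues with hev
  have hUV : U * star U = 1 := (Matrix.mem_unitaryGroup_iff).mp (Matrix.IsHermitian.eigenvectorUnitary hM).2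
  have hVU : star U * U = 1 := (Matrix.mem_unitaryGroup_iff').mp (Matrix.IsHermitian.eigenvectorUnitary hM).2
  have hstar : star U = Uᵀ := by
    rw [Matrix.star_eq_conjTranspose, Matrix.conjTranspose_eq_transpose_of_trivial]
  have hspecM : M = U * Matrix.diagonal ev * Uᵀ := by
    have h := hM.spectral_theorem
    rw [← hstar]
    have hdiag : Matrix.diagonal ((RCLike.ofReal : ℝ → ℝ) ∘ hM.eigenvalues)
        = Matrix.diagonal ev := by
      congr 1
    rw [h, hdiag, Unitary.conjStarAlgAut_apply]
  -- q and its min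
  set q : ℝ → ℝ := fun ξ => (ξ ^ t J) ^ 2 + (1 - ξ ^ t 1) ^ 2 with hq
  obtain ⟨ξ₀, hξ₀mem, hξ₀min⟩ :=
    (isCompact_Icc (a := (0:ℝ)) (b := 1)).exists_isMinOn (Set.nonempty_Icc.mpr zero_le_one)
      (by fun_prop : ContinuousOn q (Set.Icc 0 1))
  set C : ℝ := q ξ₀ with hC
  have ht1pos : 0 < t 1 := by
    have h := hmono 0 hJpos
    rwa [ht0] at h
  have hCpos : 0 < C := by
    rcases lt_or_eq_of_le (sq_nonneg (1 - ξ₀ ^ t 1)) with h | h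
    · have : 0 ≤ (ξ₀ ^ t J) ^ 2 := sq_nonneg _
      simp only [hC, hq]; linarith
    · -- (1 - ξ₀^t1)^2 = 0 → ξ₀ = 1
      have h1 : ξ₀ ^ t 1 = 1 := by nlinarith [h.symm]
      have hξ1 : ξ₀ = 1 := by
        rcases hξ₀mem with ⟨hl, hr⟩
        by_contra hne
        have : ξ₀ < 1 := lt_of_le_of_ne hr hne
        have := pow_lt_one₀ hl this ht1pos.ne'
        · linarith
      simp only [hC, hq, hξ1, one_pow]
      norm_num
  refine ⟨C, hCpos, fun x => ?_⟩
  -- transfer to eigencoordinates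
  set y : Fin n → ℝ := Uᵀ *ᵥ x with hy
  have hUO : Uᵀ * U = 1 := by rw [← hstar]; exact hVU
  have hUO' : (Uᵀ)ᵀ * Uᵀ = 1 := by rw [Matrix.transpose_transpose, ← hstar]; exact hUV
  have hpowk : ∀ k : ℕ, M ^ k = U * Matrix.diagonal (fun i => ev i ^ k) * Uᵀ := by
    intro k
    rw [hspecM, conj_pow' U _ Uᵀ hUO (by rw [← hstar]; exact hUV), Matrix.diagonal_pow]
    rfl
  have key : ∀ k : ℕ, ∑ i, ((M ^ k *ᵥ x) i) ^ 2 = ∑ i, (ev i ^ k) ^ 2 * (y i) ^ 2 := by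
    intro k
    rw [hpowk k, ← Matrix.mulVec_mulVec, ← Matrix.mulVec_mulVec, orth_norm U hUO]
    congr 1; ext i
    rw [Matrix.mulVec_diagonal]
    ring
  have keyd : ∀ a b : ℕ, ∑ i, (((M ^ a - M ^ b) *ᵥ x) i) ^ 2
      = ∑ i, (ev i ^ a - ev i ^ b) ^ 2 * (y i) ^ 2 := by
    intro a b
    have : M ^ a - M ^ b = U * Matrix.diagonal (fun i => ev i ^ a - ev i ^ b) * Uᵀ := by
      rw [hpowk a, hpowk b, ← Matrix.sub_mul, ← Matrix.mul_sub, Matrix.diagonal_sub]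
    rw [this, ← Matrix.mulVec_mulVec, ← Matrix.mulVec_mulVec, orth_norm U hUO]
    congr 1; ext i
    rw [Matrix.mulVec_diagonal]
    ring
  have hxnorm : ∑ i, (x i) ^ 2 = ∑ i, (y i) ^ 2 := by
    have hxy : x = U *ᵥ y := by
      rw [hy, Matrix.mulVec_mulVec, ← hstar, hUV, Matrix.one_mulVec]
    rw [hxy, orth_norm U hUO]
  -- eigenvalues in [0,1]
  have hev01 : ∀ i, ev i ∈ Set.Icc (0:ℝ) 1 := fun i =>
    hspec (hM.eigenvalues_mem_spectrum_real i)
  -- combine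
  set p : Fin n → ℝ := fun i => (ev i ^ t J) ^ 2
      + ∑ j ∈ Finset.range J, (ev i ^ t j - ev i ^ t (j+1)) ^ 2 with hp
  have hmid : (∑ i, (((M ^ t J).mulVec x) i) ^ 2) +
      ∑ j ∈ Finset.range J, ∑ i, (((M ^ t j - M ^ t (j + 1)).mulVec x) i) ^ 2
      = ∑ i, p i * (y i) ^ 2 := by
    calc (∑ i, (((M ^ t J).mulVec x) i) ^ 2) +
        ∑ j ∈ Finset.range J, ∑ i, (((M ^ t j - M ^ t (j + 1)).mulVec x) i) ^ 2
        = (∑ i, (ev i ^ t J) ^ 2 * (y i) ^ 2)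
          + ∑ j ∈ Finset.range J, ∑ i, (ev i ^ t j - ev i ^ t (j+1)) ^ 2 * (y i) ^ 2 := by
          rw [key]
          exact congrArg _ (Finset.sum_congr rfl fun j _ => keyd _ _)
      _ = (∑ i, (ev i ^ t J) ^ 2 * (y i) ^ 2)
          + ∑ i, ∑ j ∈ Finset.range J, (ev i ^ t j - ev i ^ t (j+1)) ^ 2 * (y i) ^ 2 := by
          rw [Finset.sum_comm]
      _ = ∑ i, p i * (y i) ^ 2 := by
          rw [← Finset.sum_add_distrib]
          exact Finset.sum_congr rfl fun i _ => by rw [hp, add_mul, Finset.sum_mul]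
  have hple : ∀ i, p i ≤ 1 := fun i =>
    scalar_upper J t ht0 hmono (ev i) (hev01 i).1 (hev01 i).2
  have hCle : ∀ i, C ≤ p i := by
    intro i
    have h1 : C ≤ q (ev i) := hξ₀min (hev01 i)
    have h2 : (ev i ^ t 0 - ev i ^ t (0+1)) ^ 2
        ≤ ∑ j ∈ Finset.range J, (ev i ^ t j - ev i ^ t (j+1)) ^ 2 :=
      Finset.single_le_sum (f := fun j => (ev i ^ t j - ev i ^ t (j+1)) ^ 2)
        (fun j _ => sq_nonneg _) (Finset.mem_range.mpr hJpos)
    rw [ht0, pow_zero] at h2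
    norm_num at h2
    have hq2 : q (ev i) = (ev i ^ t J) ^ 2 + (1 - ev i ^ t 1) ^ 2 := rfl
    rw [hq2] at h1
    refine h1.trans ?_
    show (ev i ^ t J) ^ 2 + (1 - ev i ^ t 1) ^ 2
      ≤ (ev i ^ t J) ^ 2 + ∑ j ∈ Finset.range J, (ev i ^ t j - ev i ^ t (j+1)) ^ 2
    linarith [h2]
  constructor
  · rw [hmid, hxnorm, Finset.mul_sum]
    exact Finset.sum_le_sum fun i _ =>
      mul_le_mul_of_nonneg_right (hCle i) (sq_nonneg _)
  · rw [hmid, hxnorm]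
    calc ∑ i, p i * (y i) ^ 2 ≤ ∑ i, 1 * (y i) ^ 2 :=
          Finset.sum_le_sum fun i _ =>
            mul_le_mul_of_nonneg_right (hple i) (sq_nonneg _)
      _ = ∑ i, (y i) ^ 2 := by simp
end

section
/- Let P be an n×n real matrix such that M := D^(−1/2) P D^(1/2) is symmetric with eigenvalues in [0,1], where D is a diagonal matrix with positive diagonal entries. Define the weighted norm ‖x‖_{D^{−1/2}} := ‖D^{−1/2} x‖₂ on ℝⁿ. Given natural numbers 0 = t₀ < t₁ < ⋯ < t_J, set Φ'_J := P^(t_J) and Ψ'_j := P^(t_j) − P^(t_{j+1}) for 0 ≤ j ≤ J−1. Then there exists C > 0 depending only on t₁, t_J such that for every x ∈ ℝⁿ, C‖x‖²_{D^{−1/2}} ≤ ‖Φ'_J x‖²_{D^{−1/2}} + Σ_{j=0}^{J-1} ‖Ψ'_j x‖²_{D^{−1/2}} ≤ ‖x‖²_{D^{−1/2}}. -/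
open Matrix Finset in
private lemma orth_sum_sq {n : ℕ} {U : Matrix (Fin n) (Fin n) ℝ}
    (hU : Uᵀ * U = 1) (w : Fin n → ℝ) :
    ∑ i, (U.mulVec w i) ^ 2 = ∑ i, (w i) ^ 2 := by
  have h1 : ∀ v : Fin n → ℝ, ∑ i, (v i) ^ 2 = v ⬝ᵥ v := by
    intro v; simp [dotProduct, sq]
  rw [h1, h1]
  calc U *ᵥ w ⬝ᵥ U *ᵥ w = ((U *ᵥ w) ᵥ* U) ⬝ᵥ w := by rw [dotProduct_mulVec]
    _ = (Uᵀ *ᵥ (U *ᵥ w)) ⬝ᵥ w := by rw [mulVec_transpose]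
    _ = ((Uᵀ * U) *ᵥ w) ⬝ᵥ w := by rw [mulVec_mulVec]
    _ = w ⬝ᵥ w := by rw [hU, one_mulVec]

open Matrix in
theorem stmt6 (n : ℕ) (d : Fin n → ℝ) (hd : ∀ i, 0 < d i)
    (P : Matrix (Fin n) (Fin n) ℝ)
    (M : Matrix (Fin n) (Fin n) ℝ)
    (hM : M = Matrix.diagonal (fun i => (Real.sqrt (d i))⁻¹) * P *
              Matrix.diagonal (fun i => Real.sqrt (d i)))
    (hsym : M.IsSymm) (hspec : spectrum ℝ M ⊆ Set.Icc (0 : ℝ) 1)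
    (J : ℕ) (t : ℕ → ℕ) (ht0 : t 0 = 0) (hmono : ∀ j < J, t j < t (j + 1)) :
    ∃ C > 0, ∀ x : Fin n → ℝ,
      C * ∑ i, (x i) ^ 2 / d i ≤
        (∑ i, (((P ^ t J).mulVec x) i) ^ 2 / d i) +
          ∑ j ∈ Finset.range J, ∑ i, (((P ^ t j - P ^ t (j + 1)).mulVec x) i) ^ 2 / d i ∧
      (∑ i, (((P ^ t J).mulVec x) i) ^ 2 / d i) +
          ∑ j ∈ Finset.range J, ∑ i, (((P ^ t j - P ^ t (j + 1)).mulVec x) i) ^ 2 / d i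
        ≤ ∑ i, (x i) ^ 2 / d i := by
  rcases Nat.eq_zero_or_pos J with hJ0 | hJpos
  · subst hJ0
    exact ⟨1, one_pos, fun x => by simp [ht0]⟩
  -- notation
  set S : Matrix (Fin n) (Fin n) ℝ := Matrix.diagonal (fun i => Real.sqrt (d i)) with hS
  set Si : Matrix (Fin n) (Fin n) ℝ := Matrix.diagonal (fun i => (Real.sqrt (d i))⁻¹) with hSi
  have hsqrt : ∀ i, Real.sqrt (d i) ≠ 0 := fun i => (Real.sqrt_pos.2 (hd i)).ne'
  have hSiS : Si * S = 1 := by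
    rw [hSi, hS, diagonal_mul_diagonal]
    have h : (fun i => (Real.sqrt (d i))⁻¹ * Real.sqrt (d i)) = fun _ => (1 : ℝ) :=
      funext fun i => inv_mul_cancel₀ (hsqrt i)
    rw [h, diagonal_one]
  have hSSi : S * Si = 1 := by
    rw [hSi, hS, diagonal_mul_diagonal]
    have h : (fun i => Real.sqrt (d i) * (Real.sqrt (d i))⁻¹) = fun _ => (1 : ℝ) :=
      funext fun i => mul_inv_cancel₀ (hsqrt i)
    rw [h, diagonal_one]
  have hconj : ∀ m : ℕ, M ^ m = Si * P ^ m * S := by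
    intro m
    induction m with
    | zero => simp [hSiS]
    | succ k ih =>
      rw [pow_succ, pow_succ, ih, hM]
      calc Si * P ^ k * S * (Si * P * S)
          = Si * P ^ k * (S * Si) * (P * S) := by noncomm_ring
        _ = Si * P ^ k * 1 * (P * S) := by rw [hSSi]
        _ = Si * (P ^ k * P) * S := by noncomm_ring
  have hMSi : ∀ m : ℕ, M ^ m * Si = Si * P ^ m := by
    intro m
    rw [hconj, mul_assoc, hSSi, mul_one]
  -- spectral data
  have hH : M.IsHermitian := hsym
  set U : Matrix (Fin n) (Fin n) ℝ := (hH.eigenvectorUnitary : Matrix (Fin n) (Fin n) ℝ) with hUdef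
  set lam : Fin n → ℝ := hH.eigenvalues with hlamdef
  have hstarU : star U = Uᵀ := by
    rw [Matrix.star_eq_conjTranspose]; exact conjTranspose_eq_transpose_of_trivial U
  have hU2 : U * Uᵀ = 1 := by
    rw [← hstarU]; exact mem_unitaryGroup_iff.mp hH.eigenvectorUnitary.2
  have hU1 : Uᵀ * U = 1 := by
    rw [← hstarU]; exact mem_unitaryGroup_iff'.mp hH.eigenvectorUnitary.2
  have hspecM : M = U * diagonal lam * Uᵀ := by
    rw [← hstarU]
    have := hH.spectral_theorem
    simpa using this
  have hMpow : ∀ m : ℕ, M ^ m = U * diagonal (fun k => lam k ^ m) * Uᵀ := by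
    intro m
    induction m with
    | zero => simp [hU2]
    | succ q ih =>
      rw [pow_succ, ih, hspecM]
      calc U * diagonal (fun k => lam k ^ q) * Uᵀ * (U * diagonal lam * Uᵀ)
          = U * diagonal (fun k => lam k ^ q) * (Uᵀ * U) * (diagonal lam * Uᵀ) := by
            noncomm_ring
        _ = U * (diagonal (fun k => lam k ^ q) * diagonal lam) * Uᵀ := by
            rw [hU1]; noncomm_ring
        _ = U * diagonal (fun k => lam k ^ (q + 1)) * Uᵀ := by
            rw [diagonal_mul_diagonal]
            congr 2
  have heig : ∀ k, lam k ∈ Set.Icc (0 : ℝ) 1 := fun k =>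
    hspec (hH.eigenvalues_mem_spectrum_real k)
  -- norm computations
  have hnorm : ∀ (a : Fin n → ℝ) (v : Fin n → ℝ),
      ∑ i, ((U * diagonal a * Uᵀ).mulVec v i) ^ 2
        = ∑ k, (a k) ^ 2 * ((Uᵀ.mulVec v) k) ^ 2 := by
    intro a v
    have h1 : (U * diagonal a * Uᵀ) *ᵥ v = U *ᵥ (diagonal a *ᵥ (Uᵀ *ᵥ v)) := by
      rw [mulVec_mulVec, mulVec_mulVec]
    rw [h1, orth_sum_sq hU1]
    refine Finset.sum_congr rfl fun k _ => ?_
    rw [mulVec_diagonal, mul_pow]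
  -- t is increasing enough
  have hge : ∀ j, j ≤ J → j ≤ t j := by
    intro j hj
    induction j with
    | zero => exact Nat.zero_le _
    | succ q ih =>
      have hq : q < J := Nat.lt_of_lt_of_le (Nat.lt_succ_self q) hj
      have := hmono q hq
      have := ih (Nat.le_of_lt hq)
      omega
  have htJpos : 0 < t J := Nat.lt_of_lt_of_le hJpos (hge J le_rfl)
  have ht1pos : 0 < t 1 := by simpa [ht0] using hmono 0 hJpos
  -- scalar upper bound
  have scal_up : ∀ μ : ℝ, 0 ≤ μ → μ ≤ 1 →
      (μ ^ t J) ^ 2 + ∑ j ∈ Finset.range J, (μ ^ t j - μ ^ t (j + 1)) ^ 2 ≤ 1 := by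
    intro μ h0 h1
    have hstep : ∀ j ∈ Finset.range J,
        (μ ^ t j - μ ^ t (j + 1)) ^ 2 ≤ (μ ^ t j) ^ 2 - (μ ^ t (j + 1)) ^ 2 := by
      intro j hj
      have hle : μ ^ t (j + 1) ≤ μ ^ t j :=
        pow_le_pow_of_le_one h0 h1 (hmono j (Finset.mem_range.mp hj)).le
      have hb : 0 ≤ μ ^ t (j + 1) := pow_nonneg h0 _
      nlinarith
    have h2 : ∑ j ∈ Finset.range J, (μ ^ t j - μ ^ t (j + 1)) ^ 2
        ≤ ∑ j ∈ Finset.range J, ((μ ^ t j) ^ 2 - (μ ^ t (j + 1)) ^ 2) :=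
      Finset.sum_le_sum hstep
    have h3 : ∑ j ∈ Finset.range J, ((μ ^ t j) ^ 2 - (μ ^ t (j + 1)) ^ 2)
        = (μ ^ t 0) ^ 2 - (μ ^ t J) ^ 2 :=
      Finset.sum_range_sub' (fun j => (μ ^ t j) ^ 2) J
    rw [h3, ht0, pow_zero, one_pow] at h2
    linarith
  -- the constant
  set g0 : ℝ → ℝ := fun μ => (μ ^ t J) ^ 2 + (1 - μ ^ t 1) ^ 2 with hg0
  have hcont : Continuous g0 := by fun_prop
  obtain ⟨μ₀, hμ₀, hmin⟩ := (isCompact_Icc (a := (0:ℝ)) (b := 1)).exists_isMinOn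
    ⟨0, by norm_num⟩ hcont.continuousOn
  refine ⟨g0 μ₀, ?_, fun x => ?_⟩
  · rcases eq_or_ne μ₀ 0 with h | h
    · have : g0 μ₀ = 1 := by
        simp [hg0, h, zero_pow htJpos.ne', zero_pow ht1pos.ne']
      rw [this]; norm_num
    · have h1 : 0 < (μ₀ ^ t J) ^ 2 := by positivity
      have h2 : 0 ≤ (1 - μ₀ ^ t 1) ^ 2 := sq_nonneg _
      simp only [hg0]
      linarith
  -- scalar lower bound
  have scal_lo : ∀ μ : ℝ, 0 ≤ μ → μ ≤ 1 →
      g0 μ₀ ≤ (μ ^ t J) ^ 2 + ∑ j ∈ Finset.range J, (μ ^ t j - μ ^ t (j + 1)) ^ 2 := by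
    intro μ h0 h1
    have hm : g0 μ₀ ≤ g0 μ := hmin ⟨h0, h1⟩
    have hterm : (1 - μ ^ t 1) ^ 2
        ≤ ∑ j ∈ Finset.range J, (μ ^ t j - μ ^ t (j + 1)) ^ 2 := by
      have := Finset.single_le_sum (f := fun j => (μ ^ t j - μ ^ t (j + 1)) ^ 2)
        (fun j _ => sq_nonneg _) (Finset.mem_range.mpr hJpos)
      simpa [ht0] using this
    simp only [hg0] at hm ⊢
    linarith
  -- change of variables
  set y : Fin n → ℝ := Si.mulVec x with hy
  set z : Fin n → ℝ := Uᵀ.mulVec y with hz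
  have hw : ∀ v : Fin n → ℝ, ∑ i, (v i) ^ 2 / d i = ∑ i, (Si.mulVec v i) ^ 2 := by
    intro v
    refine Finset.sum_congr rfl fun i _ => ?_
    rw [hSi, mulVec_diagonal, mul_pow, inv_pow, Real.sq_sqrt (hd i).le, div_eq_mul_inv,
      mul_comm]
  have hPt : ∀ m : ℕ, Si.mulVec ((P ^ m).mulVec x) = (M ^ m).mulVec y := by
    intro m
    rw [hy, mulVec_mulVec, mulVec_mulVec, hMSi]
  have hPd : ∀ a b : ℕ, Si.mulVec ((P ^ a - P ^ b).mulVec x) = ((M ^ a - M ^ b)).mulVec y := by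
    intro a b
    rw [hy, mulVec_mulVec, mulVec_mulVec, Matrix.mul_sub, Matrix.sub_mul, hMSi, hMSi]
  have hMd : ∀ a b : ℕ, M ^ a - M ^ b
      = U * diagonal (fun k => lam k ^ a - lam k ^ b) * Uᵀ := by
    intro a b
    rw [hMpow, hMpow, ← diagonal_sub, ← Matrix.sub_mul, ← Matrix.mul_sub]
  -- rewritten sums
  have e1 : ∑ i, (((P ^ t J).mulVec x) i) ^ 2 / d i
      = ∑ k, (lam k ^ t J) ^ 2 * (z k) ^ 2 := by
    rw [hw, hPt, hMpow, hnorm]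
  have e2 : ∀ j, ∑ i, (((P ^ t j - P ^ t (j + 1)).mulVec x) i) ^ 2 / d i
      = ∑ k, (lam k ^ t j - lam k ^ t (j + 1)) ^ 2 * (z k) ^ 2 := by
    intro j
    rw [hw, hPd, hMd, hnorm]
  have e3 : ∑ i, (x i) ^ 2 / d i = ∑ k, (z k) ^ 2 := by
    rw [hw x, ← hy, hz]
    have hUt : (Uᵀ)ᵀ * Uᵀ = 1 := by rw [Matrix.transpose_transpose]; exact hU2
    exact (orth_sum_sq hUt y).symm
  have etot : (∑ i, (((P ^ t J).mulVec x) i) ^ 2 / d i) +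
      ∑ j ∈ Finset.range J, ∑ i, (((P ^ t j - P ^ t (j + 1)).mulVec x) i) ^ 2 / d i
      = ∑ k, ((lam k ^ t J) ^ 2
          + ∑ j ∈ Finset.range J, (lam k ^ t j - lam k ^ t (j + 1)) ^ 2) * (z k) ^ 2 := by
    rw [e1]
    rw [Finset.sum_congr rfl fun j _ => e2 j]
    rw [Finset.sum_comm]
    rw [← Finset.sum_add_distrib]
    refine Finset.sum_congr rfl fun k _ => ?_
    rw [add_mul, Finset.sum_mul]
  rw [etot, e3]
  constructor
  · rw [Finset.mul_sum]
    refine Finset.sum_le_sum fun k _ => ?_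
    have := scal_lo (lam k) (heig k).1 (heig k).2
    nlinarith [sq_nonneg (z k)]
  · calc ∑ k, ((lam k ^ t J) ^ 2
          + ∑ j ∈ Finset.range J, (lam k ^ t j - lam k ^ t (j + 1)) ^ 2) * (z k) ^ 2
        ≤ ∑ k, 1 * (z k) ^ 2 := by
          refine Finset.sum_le_sum fun k _ => ?_
          exact mul_le_mul_of_nonneg_right (scal_up (lam k) (heig k).1 (heig k).2)
            (sq_nonneg _)
      _ = ∑ k, (z k) ^ 2 := by simp
end

section
/- Let P be an n×n real matrix, let 0 = t₀ < t₁ < ⋯ < t_J be natural numbers, and define Ψ_j := P^(t_j) − P^(t_{j+1}) (with Ψ₀ := I − P^(t₁)). For a path p = (j₁, …, j_m) define U_p x := Ψ_{j_m} |Ψ_{j_{m−1}} ⋯ |Ψ_{j₂} |Ψ_{j₁} x|| ⋯ |, where |·| is entrywise absolute value. Let Π be a permutation matrix and define the permuted operators Ψ̄_j := Π Ψ_j Πᵀ and Ū_p correspondingly. Then Ū_p (Πx) = Π (U_p x) for all x ∈ ℝⁿ. -/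
/-- The scattering propagator `U_p x = Ψ_{j_m} |Ψ_{j_{m-1}} ⋯ |Ψ_{j_1} x| ⋯ |`
for a path `p = [j₁, …, j_m]` of filter indices. -/
def scatU {n : ℕ} (Ψ : ℕ → Matrix (Fin n) (Fin n) ℝ) :
    List ℕ → (Fin n → ℝ) → (Fin n → ℝ)
  | [], x => x
  | [j], x => (Ψ j).mulVec x
  | j :: p, x => scatU Ψ p (fun i => |(Ψ j).mulVec x i|)

open Matrix in
lemma permMatrix_transpose_mul_self {n : ℕ} (σ : Equiv.Perm (Fin n)) :
    (σ.permMatrix ℝ).transpose * σ.permMatrix ℝ = 1 := by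
  rw [← PEquiv.toMatrix_symm, ← Equiv.toPEquiv_symm, ← PEquiv.toMatrix_trans,
    ← Equiv.toPEquiv_trans]
  simp [Equiv.toPEquiv_refl]

open Matrix in
lemma permMatrix_mulVec_apply {n : ℕ} (σ : Equiv.Perm (Fin n)) (x : Fin n → ℝ) (i : Fin n) :
    (σ.permMatrix ℝ).mulVec x i = x (σ i) := by
  simp only [mulVec, dotProduct, PEquiv.toMatrix_apply, Equiv.toPEquiv_apply, Option.mem_def,
    Option.some.injEq]
  rw [Finset.sum_eq_single (σ i)] <;> simp +contextual [eq_comm]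

open Matrix in
theorem stmt9 (n : ℕ) (P : Matrix (Fin n) (Fin n) ℝ)
    (J : ℕ) (t : ℕ → ℕ) (ht0 : t 0 = 0) (hmono : ∀ j < J, t j < t (j + 1))
    (Ψ : ℕ → Matrix (Fin n) (Fin n) ℝ) (hΨ : ∀ j, Ψ j = P ^ t j - P ^ t (j + 1))
    (σ : Equiv.Perm (Fin n))
    (Pi : Matrix (Fin n) (Fin n) ℝ) (hPi : Pi = σ.permMatrix ℝ)
    (Ψbar : ℕ → Matrix (Fin n) (Fin n) ℝ)
    (hΨbar : ∀ j, Ψbar j = Pi * Ψ j * Pi.transpose)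
    (p : List ℕ) (x : Fin n → ℝ) :
    scatU Ψbar p (Pi.mulVec x) = Pi.mulVec (scatU Ψ p x) := by
  have hkey : ∀ (j : ℕ) (y : Fin n → ℝ),
      (Ψbar j).mulVec (Pi.mulVec y) = Pi.mulVec ((Ψ j).mulVec y) := by
    intro j y
    rw [mulVec_mulVec, mulVec_mulVec, hΨbar j, mul_assoc (Pi * Ψ j), hPi,
      permMatrix_transpose_mul_self, mul_one]
  have habs : ∀ (y : Fin n → ℝ),
      (fun i => |Pi.mulVec y i|) = Pi.mulVec (fun i => |y i|) := by
    intro y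
    funext i
    rw [hPi, permMatrix_mulVec_apply, permMatrix_mulVec_apply]
  induction p generalizing x with
  | nil => simp [scatU]
  | cons j q ih =>
    cases q with
    | nil => simpa [scatU] using hkey j x
    | cons k r =>
      show scatU Ψbar (k :: r) (fun i => |(Ψbar j).mulVec (Pi.mulVec x) i|) = _
      rw [hkey j x, habs, ih]
      rfl
end

section
/- With the setup of the scattering transform U_p built from wavelets Ψ_j := P^(t_j) − P^(t_{j+1}) and a permutation matrix Π with permuted operators Ū_p, define the scattering moments S_{p,q} x := Σ_{i=1}^n |U_p x [i]|^q for q ∈ ℕ. Then S̄_{p,q}(Πx) = S_{p,q} x for all x ∈ ℝⁿ, all paths p, and all q ≥ 1. -/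
/-- The scattering moment `S_{p,q} x = ∑ᵢ |U_p x [i]|^q`. -/
def scatS {n : ℕ} (Ψ : ℕ → Matrix (Fin n) (Fin n) ℝ) (p : List ℕ) (q : ℕ)
    (x : Fin n → ℝ) : ℝ :=
  ∑ i, |scatU Ψ p x i| ^ q

open Matrix

lemma permMatrix_mulVec {n : ℕ} (σ : Equiv.Perm (Fin n)) (x : Fin n → ℝ) :
    (σ.permMatrix ℝ).mulVec x = fun i => x (σ i) := by
  funext i
  simp [Equiv.Perm.permMatrix, Matrix.mulVec, dotProduct,
    PEquiv.toMatrix_apply, Equiv.toPEquiv_apply]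

lemma conj_mulVec {n : ℕ} (σ : Equiv.Perm (Fin n)) (A : Matrix (Fin n) (Fin n) ℝ)
    (x : Fin n → ℝ) :
    (σ.permMatrix ℝ * A * (σ.permMatrix ℝ).transpose).mulVec
      ((σ.permMatrix ℝ).mulVec x) = (σ.permMatrix ℝ).mulVec (A.mulVec x) := by
  have h : (σ.permMatrix ℝ).transpose * σ.permMatrix ℝ = 1 := by
    simp [Equiv.Perm.permMatrix, ← PEquiv.toMatrix_symm, ← PEquiv.toMatrix_trans,
      ← Equiv.toPEquiv_symm, ← Equiv.toPEquiv_trans]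
  rw [Matrix.mulVec_mulVec, Matrix.mulVec_mulVec, Matrix.mul_assoc (_ * A), h,
    Matrix.mul_one]

lemma scatU_perm {n : ℕ} (σ : Equiv.Perm (Fin n)) (Ψ Ψbar : ℕ → Matrix (Fin n) (Fin n) ℝ)
    (hΨbar : ∀ j, Ψbar j = σ.permMatrix ℝ * Ψ j * (σ.permMatrix ℝ).transpose)
    (p : List ℕ) (x : Fin n → ℝ) :
    scatU Ψbar p ((σ.permMatrix ℝ).mulVec x) = (σ.permMatrix ℝ).mulVec (scatU Ψ p x) := by
  induction p generalizing x with
  | nil => simp [scatU]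
  | cons j p ih =>
    cases p with
    | nil =>
      show (Ψbar j).mulVec _ = _
      rw [hΨbar, conj_mulVec]
      rfl
    | cons k p =>
      show scatU Ψbar (k :: p) _ = _
      have h1 : (fun i => |(Ψbar j).mulVec ((σ.permMatrix ℝ).mulVec x) i|)
          = (σ.permMatrix ℝ).mulVec (fun i => |(Ψ j).mulVec x i|) := by
        rw [hΨbar, conj_mulVec, permMatrix_mulVec, permMatrix_mulVec]
      rw [h1, ih]
      rfl

theorem stmt10 (n : ℕ) (P : Matrix (Fin n) (Fin n) ℝ)
    (J : ℕ) (t : ℕ → ℕ) (ht0 : t 0 = 0) (hmono : ∀ j < J, t j < t (j + 1))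
    (Ψ : ℕ → Matrix (Fin n) (Fin n) ℝ) (hΨ : ∀ j, Ψ j = P ^ t j - P ^ t (j + 1))
    (σ : Equiv.Perm (Fin n))
    (Pi : Matrix (Fin n) (Fin n) ℝ) (hPi : Pi = σ.permMatrix ℝ)
    (Ψbar : ℕ → Matrix (Fin n) (Fin n) ℝ)
    (hΨbar : ∀ j, Ψbar j = Pi * Ψ j * Pi.transpose)
    (p : List ℕ) (q : ℕ) (hq : 1 ≤ q) (x : Fin n → ℝ) :
    scatS Ψbar p q (Pi.mulVec x) = scatS Ψ p q x := by
  subst hPi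
  unfold scatS
  rw [scatU_perm σ Ψ Ψbar hΨbar p x, permMatrix_mulVec]
  exact Fintype.sum_equiv σ _ _ (fun i => rfl)
end
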